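/- Let S(n) be the set of tuples (a₁,a₂,a₃,b₁,b₂,b₃,c₁,c₂,c₃) of nonnegative integers with a₁+a₂+a₃ = b₁+b₂+b₃ = c₁+c₂+c₃ = n, with aᵢ+bᵢ+cᵢ = n for each i ∈ {1,2,3}, and with 3 dividing b₂+2b₃+2c₂+c₃. Then for every positive integer n, 2·(-1)^n·B_n = 3·∑_{(a,b,c)∈S(n)} C(n;a₁,a₂,a₃)·C(n;b₁,b₂,b₃)·C(n;c₁,c₂,c₃) − C(3n;n,n,n), where B_n = ∑_{k=0}^{⌊n/3⌋} (-1)^k 3^{n-3k} C(n,3k) C(3k,2k) C(2k,k) is Zagier's sporadic sequence B. -/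

import Mathlib

open Finset

/-- Zagier's sporadic sequence B. -/
def zagierB (n : ℕ) : ℤ :=
  ∑ k ∈ range (n / 3 + 1),
    (-1) ^ k * 3 ^ (n - 3 * k) * (n.choose (3 * k) : ℤ) *
      ((3 * k).choose (2 * k) : ℤ) * ((2 * k).choose k : ℤ)

/-- The multinomial coefficient `C(n; a₁, a₂, a₃) = n! / (a₁! a₂! a₃!)`
(for `a₁ + a₂ + a₃ = n`). -/
def multinom (n : ℕ) (a : Fin 3 → ℕ) : ℤ :=
  (n.factorial / ((a 0).factorial * (a 1).factorial * (a 2).factorial) : ℕ)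

namespace ZagierBAux

open MvPolynomial

lemma cube_identity {R : Type*} [CommRing R] (w x y z : R) (h : w^2 + w + 1 = 0) :
    (x + y + z) * (x + w*y + w^2*z) * (x + w^2*y + w*z)
      = x^3 + y^3 + z^3 - 3*(x*y*z) := by
  linear_combination (w^2*(x*y*z + y^2*z + y*z^2) + w*(x*y^2 + x*z^2 + y^3 + z^3 - x*y*z)
    + (x^2*y + 3*x*y*z + x^2*z - y^3 - z^3)) * h

noncomputable def om : ℂ := ⟨-1/2, Real.sqrt 3 / 2⟩

lemma om_sq : om^2 + om + 1 = 0 := by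
  have h3 : Real.sqrt 3 * Real.sqrt 3 = 3 := Real.mul_self_sqrt (by norm_num)
  apply Complex.ext <;>
    simp [om, pow_two, Complex.add_re, Complex.add_im, Complex.mul_re, Complex.mul_im] <;>
    nlinarith [h3]

lemma om_im_ne : om.im ≠ 0 := by
  simp only [om]
  positivity

lemma om_cube : om^3 = 1 := by
  linear_combination (om - 1) * om_sq

lemma multinom_eq (n : ℕ) (a : Fin 3 → ℕ) (h : ∑ i, a i = n) :
    multinom n a = (Nat.multinomial Finset.univ a : ℤ) := by
  unfold multinom Nat.multinomial
  rw [show ∑ i ∈ Finset.univ, a i = n from h]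
  congr 2
  rw [Fin.prod_univ_three]

lemma mult_nnn (n : ℕ) :
    ((3*n).factorial / n.factorial ^ 3 : ℕ) = Nat.multinomial Finset.univ (fun _ : Fin 3 => n) := by
  have hs := Nat.multinomial_spec (Finset.univ : Finset (Fin 3)) (fun _ : Fin 3 => n)
  rw [Fin.prod_univ_three, Fin.sum_univ_three] at hs
  rw [Nat.div_eq_of_eq_mul_left (by positivity)]
  rw [show 3*n = n+n+n by ring, ← hs]; ring

lemma mult4 (k n : ℕ) (h : 3*k ≤ n) :
    (Nat.multinomial (Finset.univ : Finset (Fin 4)) ![k,k,k,n-3*k] : ℕ)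
      = n.choose (3*k) * ((3*k).choose (2*k)) * ((2*k).choose k) := by
  have hs := Nat.multinomial_spec (Finset.univ : Finset (Fin 4)) ![k,k,k,n-3*k]
  rw [Fin.prod_univ_four, Fin.sum_univ_four] at hs
  have e0 : (![k,k,k,n-3*k] : Fin 4 → ℕ) 0 = k := rfl
  have e1 : (![k,k,k,n-3*k] : Fin 4 → ℕ) 1 = k := rfl
  have e2 : (![k,k,k,n-3*k] : Fin 4 → ℕ) 2 = k := rfl
  have e3 : (![k,k,k,n-3*k] : Fin 4 → ℕ) 3 = n-3*k := rfl
  rw [e0, e1, e2, e3] at hs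
  have hsum : k + k + k + (n - 3*k) = n := by omega
  rw [hsum] at hs
  have h1 : n.choose (3*k) * (3*k).factorial * (n - 3*k).factorial = n.factorial :=
    Nat.choose_mul_factorial_mul_factorial h
  have h2 : (3*k).choose (2*k) * (2*k).factorial * k.factorial = (3*k).factorial := by
    have := Nat.choose_mul_factorial_mul_factorial (show 2*k ≤ 3*k by omega)
    rwa [show 3*k - 2*k = k by omega] at this
  have h3 : (2*k).choose k * k.factorial * k.factorial = (2*k).factorial := by
    have := Nat.choose_mul_factorial_mul_factorial (show k ≤ 2*k by omega)
    rwa [show 2*k - k = k by omega] at this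
  have hpos : 0 < k.factorial * k.factorial * k.factorial * (n - 3*k).factorial := by positivity
  apply Nat.eq_of_mul_eq_mul_left hpos
  calc k.factorial * k.factorial * k.factorial * (n-3*k).factorial
        * Nat.multinomial Finset.univ ![k,k,k,n-3*k]
      = n.factorial := by rw [← hs]
    _ = _ := by rw [← h1, ← h2, ← h3]; ring

noncomputable def mono (a : Fin 3 → ℕ) : MvPolynomial (Fin 3) ℂ :=
  monomial (Finsupp.equivFunOnFinite.symm a) 1

lemma mono_eq_prod (a : Fin 3 → ℕ) : mono a = ∏ i, (X i : MvPolynomial (Fin 3) ℂ) ^ a i := by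
  rw [mono, monomial_eq, map_one, one_mul]
  rw [Finsupp.prod_fintype _ _ (fun i => pow_zero _)]
  rfl

lemma mono_mul (a b : Fin 3 → ℕ) : mono a * mono b = mono (a + b) := by
  simp only [mono_eq_prod, ← Finset.prod_mul_distrib, ← pow_add]
  rfl

lemma coeff_mono (n : ℕ) (a : Fin 3 → ℕ) :
    coeff (Finsupp.equivFunOnFinite.symm (fun _ : Fin 3 => n)) (mono a)
      = if a = (fun _ => n) then (1:ℂ) else 0 := by
  rw [mono, coeff_monomial]
  congr 1
  simp [Equiv.apply_eq_iff_eq]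

lemma lin_pow (u v : ℂ) (n : ℕ) :
    (X 0 + C u * X 1 + C v * X 2 : MvPolynomial (Fin 3) ℂ) ^ n
      = ∑ a ∈ piAntidiag Finset.univ n,
          C ((Nat.multinomial Finset.univ a : ℂ) * u ^ a 1 * v ^ a 2) * mono a := by
  have h : (X 0 + C u * X 1 + C v * X 2 : MvPolynomial (Fin 3) ℂ)
      = ∑ i, ![X 0, C u * X 1, C v * X 2] i := by
    rw [Fin.sum_univ_three]; rfl
  rw [h, Finset.sum_pow_eq_sum_piAntidiag]
  refine Finset.sum_congr rfl fun a _ => ?_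
  rw [Fin.prod_univ_three]
  show _ * ((X 0)^(a 0) * (C u * X 1)^(a 1) * (C v * X 2)^(a 2)) = _
  rw [mono_eq_prod, Fin.prod_univ_three, mul_pow, mul_pow, ← C_pow, ← C_pow]
  rw [map_mul, map_mul, ← C_eq_coe_nat]
  ring

lemma coeff_C_mono3 (n : ℕ) (s t u : ℂ) (a b c : Fin 3 → ℕ) :
    coeff (Finsupp.equivFunOnFinite.symm (fun _ : Fin 3 => n))
        (C s * mono a * (C t * mono b) * (C u * mono c))
      = s * t * u * (if (fun i => a i + b i + c i) = (fun _ : Fin 3 => n) then (1:ℂ) else 0) := by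
  have h : C s * mono a * (C t * mono b) * (C u * mono c)
      = C (s * t * u) * (mono a * mono b * mono c) := by
    rw [map_mul, map_mul]; ring
  rw [h, mono_mul, mono_mul, coeff_C_mul, coeff_mono]
  rfl

lemma coeff_triple (n : ℕ) (u₂ v₂ u₃ v₃ : ℂ) :
    coeff (Finsupp.equivFunOnFinite.symm (fun _ : Fin 3 => n))
      ((X 0 + C (1:ℂ) * X 1 + C (1:ℂ) * X 2) ^ n
        * (X 0 + C u₂ * X 1 + C v₂ * X 2) ^ n
        * (X 0 + C u₃ * X 1 + C v₃ * X 2) ^ n)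
      = ∑ a ∈ piAntidiag Finset.univ n, ∑ b ∈ piAntidiag Finset.univ n,
          ∑ c ∈ piAntidiag Finset.univ n,
          ((Nat.multinomial Finset.univ a : ℂ) * (Nat.multinomial Finset.univ b : ℂ)
            * (Nat.multinomial Finset.univ c : ℂ))
            * (u₂ ^ b 1 * v₂ ^ b 2 * u₃ ^ c 1 * v₃ ^ c 2)
            * (if (fun i => a i + b i + c i) = (fun _ : Fin 3 => n) then (1:ℂ) else 0) := by
  rw [lin_pow, lin_pow, lin_pow]
  simp_rw [Finset.sum_mul, Finset.mul_sum, coeff_sum]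
  simp_rw [Finset.sum_mul, coeff_sum]
  refine Finset.sum_congr rfl fun a _ => ?_
  rw [Finset.sum_comm]
  refine Finset.sum_congr rfl fun b _ => Finset.sum_congr rfl fun c _ => ?_
  rw [coeff_C_mono3]
  congr 1
  rw [one_pow, one_pow]
  ring

lemma coeff_P_pow (n : ℕ) :
    coeff (Finsupp.equivFunOnFinite.symm (fun _ : Fin 3 => n))
      ((X 0^3 + X 1^3 + X 2^3 - 3*(X 0*X 1*X 2) : MvPolynomial (Fin 3) ℂ)^n)
      = (((-1)^n * zagierB n : ℤ) : ℂ) := by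
  have hP : (X 0^3 + X 1^3 + X 2^3 - 3*(X 0*X 1*X 2) : MvPolynomial (Fin 3) ℂ)
      = ∑ i, ![X 0^3, X 1^3, X 2^3, C (-3:ℂ) * (X 0*X 1*X 2)] i := by
    rw [Fin.sum_univ_four]
    show _ = X 0^3 + X 1^3 + X 2^3 + C (-3:ℂ) * (X 0*X 1*X 2)
    rw [map_neg, map_ofNat]
    ring
  rw [hP, Finset.sum_pow_eq_sum_piAntidiag]
  have hterm : ∀ k : Fin 4 → ℕ,
      (Nat.multinomial Finset.univ k : MvPolynomial (Fin 3) ℂ) *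
        ∏ i, ![X 0^3, X 1^3, X 2^3, C (-3:ℂ) * (X 0*X 1*X 2)] i ^ k i
      = C ((Nat.multinomial Finset.univ k : ℂ) * (-3)^(k 3)) *
          mono (fun i => 3 * k (Fin.castSucc i) + k 3) := by
    intro k
    rw [Fin.prod_univ_four, mono_eq_prod, Fin.prod_univ_three]
    show (Nat.multinomial Finset.univ k : MvPolynomial (Fin 3) ℂ) *
        ((X 0^3)^(k 0) * (X 1^3)^(k 1) * (X 2^3)^(k 2) * (C (-3:ℂ) * (X 0*X 1*X 2))^(k 3)) =
      _ * ((X 0)^(3 * k 0 + k 3) * (X 1)^(3 * k 1 + k 3) * (X 2)^(3 * k 2 + k 3))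
    rw [mul_pow (C (-3:ℂ)), ← C_pow, map_mul, ← C_eq_coe_nat]
    rw [mul_pow, mul_pow, ← pow_mul, ← pow_mul, ← pow_mul]
    rw [pow_add, pow_add, pow_add, mul_comm 3 (k 0), mul_comm 3 (k 1), mul_comm 3 (k 2)]
    ring
  simp_rw [hterm, coeff_sum, coeff_C_mul, coeff_mono]
  have hset : (piAntidiag (Finset.univ : Finset (Fin 4)) n).filter
        (fun k => (fun i => 3 * k (Fin.castSucc i) + k 3) = (fun _ : Fin 3 => n))
      = Finset.image (fun j => ![j,j,j,n-3*j]) (range (n/3+1)) := by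
    ext k
    simp only [mem_filter, mem_piAntidiag, mem_image, mem_range, Fin.sum_univ_four]
    constructor
    · rintro ⟨⟨hsum, -⟩, hcol⟩
      have h0 := congrFun hcol 0
      have h1 := congrFun hcol 1
      have h2 := congrFun hcol 2
      have c0 : Fin.castSucc (0 : Fin 3) = (0 : Fin 4) := rfl
      have c1 : Fin.castSucc (1 : Fin 3) = (1 : Fin 4) := rfl
      have c2 : Fin.castSucc (2 : Fin 3) = (2 : Fin 4) := rfl
      simp only [c0, c1, c2] at h0 h1 h2
      refine ⟨k 0, by omega, ?_⟩
      funext i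
      fin_cases i <;> simp <;> omega
    · rintro ⟨j, hj, rfl⟩
      have e0 : (![j,j,j,n-3*j] : Fin 4 → ℕ) 0 = j := rfl
      have e1 : (![j,j,j,n-3*j] : Fin 4 → ℕ) 1 = j := rfl
      have e2 : (![j,j,j,n-3*j] : Fin 4 → ℕ) 2 = j := rfl
      have e3 : (![j,j,j,n-3*j] : Fin 4 → ℕ) 3 = n-3*j := rfl
      have h3j : 3 * j ≤ n := by omega
      refine ⟨⟨by rw [e0,e1,e2,e3]; omega, fun i _ => Finset.mem_univ i⟩, ?_⟩
      funext i
      fin_cases i <;> exact (by omega : 3 * j + (n - 3 * j) = n)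
  rw [show (∑ k ∈ piAntidiag (Finset.univ : Finset (Fin 4)) n,
        (Nat.multinomial Finset.univ k : ℂ) * (-3)^(k 3) *
          (if (fun i => 3 * k (Fin.castSucc i) + k 3) = (fun _ : Fin 3 => n) then (1:ℂ) else 0))
      = ∑ k ∈ (piAntidiag (Finset.univ : Finset (Fin 4)) n).filter
          (fun k => (fun i => 3 * k (Fin.castSucc i) + k 3) = (fun _ : Fin 3 => n)),
          (Nat.multinomial Finset.univ k : ℂ) * (-3)^(k 3) from by
    rw [Finset.sum_filter]; exact Finset.sum_congr rfl fun k _ => by rw [mul_ite, mul_one, mul_zero]]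
  rw [hset, Finset.sum_image (by
    intro x _ y _ h
    have := congrFun h 0
    simpa using this)]
  rw [zagierB]
  push_cast
  rw [Finset.mul_sum]
  refine Finset.sum_congr rfl fun j hj => ?_
  rw [Finset.mem_range] at hj
  have h3j : 3 * j ≤ n := by omega
  have e3 : (![j,j,j,n-3*j] : Fin 4 → ℕ) 3 = n-3*j := rfl
  rw [mult4 j n h3j]
  have hneg : ((-3:ℂ))^(n-3*j) = (-1)^n * ((-1)^j * 3^(n-3*j)) := by
    have h1 : ((-1:ℂ))^n = (-1)^(n-3*j) * (-1)^(3*j) := by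
      rw [← pow_add, Nat.sub_add_cancel h3j]
    have h2 : ((-1:ℂ))^(3*j) = (-1)^j := by
      rw [pow_mul]; norm_num
    have h4 : ((-1:ℂ))^j * (-1)^j = 1 := by
      rw [← pow_add, ← two_mul, pow_mul]; norm_num
    rw [show (-3:ℂ) = -1 * 3 by norm_num, mul_pow]
    rw [h1, h2]
    calc (-1:ℂ)^(n-3*j) * 3^(n-3*j)
        = (-1)^(n-3*j) * ((-1)^j * (-1)^j) * 3^(n-3*j) := by rw [h4]; ring
      _ = _ := by ring
  push_cast
  rw [hneg]
  ring


abbrev T3 := (Fin 3 → ℕ) × (Fin 3 → ℕ) × (Fin 3 → ℕ)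

def ee (t : T3) : ℕ := t.2.1 1 + 2 * t.2.1 2 + 2 * t.2.2 1 + t.2.2 2

def gg (t : T3) : ℤ :=
  (Nat.multinomial Finset.univ t.1 * Nat.multinomial Finset.univ t.2.1
    * Nat.multinomial Finset.univ t.2.2 : ℕ)

noncomputable def SS (n : ℕ) : Finset T3 :=
  ((piAntidiag Finset.univ n) ×ˢ (piAntidiag Finset.univ n) ×ˢ (piAntidiag Finset.univ n)).filter
    (fun t => (fun i => t.1 i + t.2.1 i + t.2.2 i) = (fun _ : Fin 3 => n))

noncomputable def NN (n r : ℕ) : ℤ := ∑ t ∈ (SS n).filter (fun t => ee t % 3 = r), gg t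

lemma sum_S (f : T3 → ℂ) (n : ℕ) :
    ∑ t ∈ SS n, f t
      = ∑ a ∈ piAntidiag Finset.univ n, ∑ b ∈ piAntidiag Finset.univ n,
          ∑ c ∈ piAntidiag Finset.univ n,
          f (a,b,c) * (if (fun i => a i + b i + c i) = (fun _ : Fin 3 => n) then (1:ℂ) else 0) := by
  rw [SS, Finset.sum_filter, Finset.sum_product]
  simp_rw [Finset.sum_product]
  refine Finset.sum_congr rfl fun a _ => Finset.sum_congr rfl fun b _ =>
    Finset.sum_congr rfl fun c _ => ?_
  by_cases h : (fun i => a i + b i + c i) = (fun _ : Fin 3 => n) <;> simp [h]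

lemma sum_S_om (n : ℕ) :
    ∑ t ∈ SS n, (gg t : ℂ) * om ^ ee t = (((-1)^n * zagierB n : ℤ) : ℂ) := by
  rw [sum_S (fun t => (gg t : ℂ) * om ^ ee t) n, ← coeff_P_pow n]
  have hC : (C om : MvPolynomial (Fin 3) ℂ)^2 + C om + 1 = 0 := by
    rw [← map_pow, ← map_one (C : ℂ →+* MvPolynomial (Fin 3) ℂ), ← map_add, ← map_add, om_sq,
      map_zero]
  have hprod : ((X 0 + C (1:ℂ) * X 1 + C (1:ℂ) * X 2)
        * (X 0 + C om * X 1 + C (om^2) * X 2)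
        * (X 0 + C (om^2) * X 1 + C om * X 2) : MvPolynomial (Fin 3) ℂ)
      = X 0^3 + X 1^3 + X 2^3 - 3*(X 0*X 1*X 2) := by
    simp only [map_pow, map_one, one_mul]
    exact cube_identity (C om) (X 0 : MvPolynomial (Fin 3) ℂ) (X 1) (X 2) hC
  rw [← hprod, mul_pow, mul_pow, coeff_triple]
  refine Finset.sum_congr rfl fun a _ => Finset.sum_congr rfl fun b _ =>
    Finset.sum_congr rfl fun c _ => ?_
  congr 1
  rw [gg, ee]
  push_cast
  rw [← pow_mul, ← pow_mul, pow_add, pow_add, pow_add]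

lemma sum_S_one (n : ℕ) :
    ∑ t ∈ SS n, (gg t : ℂ) = (((3*n).factorial / n.factorial ^ 3 : ℕ) : ℂ) := by
  rw [sum_S (fun t => (gg t : ℂ)) n]
  have h3 : coeff (Finsupp.equivFunOnFinite.symm (fun _ : Fin 3 => n))
      ((X 0 + C (1:ℂ) * X 1 + C (1:ℂ) * X 2) ^ n
        * (X 0 + C (1:ℂ) * X 1 + C (1:ℂ) * X 2) ^ n
        * (X 0 + C (1:ℂ) * X 1 + C (1:ℂ) * X 2) ^ n)
      = (((3*n).factorial / n.factorial ^ 3 : ℕ) : ℂ) := by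
    rw [← pow_add, ← pow_add, show n + n + n = 3 * n by ring, lin_pow, coeff_sum]
    simp_rw [coeff_C_mul, coeff_mono]
    rw [Finset.sum_eq_single_of_mem (fun _ : Fin 3 => n)]
    · rw [if_pos rfl, mult_nnn]
      simp
    · simp only [mem_piAntidiag, Fin.sum_univ_three]
      exact ⟨by ring, fun i _ => Finset.mem_univ i⟩
    · intro b _ hb
      rw [if_neg hb, mul_zero]
  rw [← h3, coeff_triple]
  refine Finset.sum_congr rfl fun a _ => Finset.sum_congr rfl fun b _ =>
    Finset.sum_congr rfl fun c _ => ?_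
  congr 1
  rw [gg]
  push_cast
  ring

lemma fiber_split (n : ℕ) {M : Type*} [AddCommMonoid M] (f : T3 → M) :
    ∑ t ∈ SS n, f t
      = (∑ t ∈ (SS n).filter (fun t => ee t % 3 = 0), f t)
        + (∑ t ∈ (SS n).filter (fun t => ee t % 3 = 1), f t)
        + (∑ t ∈ (SS n).filter (fun t => ee t % 3 = 2), f t) := by
  rw [← Finset.sum_fiberwise_of_maps_to
    (g := fun t => ee t % 3) (t := range 3) (fun x _ => mem_range.mpr (Nat.mod_lt _ (by norm_num))) f]
  rw [show (3:ℕ) = 2 + 1 from rfl, Finset.sum_range_succ, Finset.sum_range_succ,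
    Finset.sum_range_one]

lemma om_pow_fiber (n r : ℕ) :
    ∑ t ∈ (SS n).filter (fun t => ee t % 3 = r), (gg t : ℂ) * om ^ ee t
      = om ^ r * ((NN n r : ℤ) : ℂ) := by
  rw [NN]
  push_cast
  rw [Finset.mul_sum]
  refine Finset.sum_congr rfl fun t ht => ?_
  rw [Finset.mem_filter] at ht
  have he : om ^ ee t = om ^ r := by
    conv_lhs => rw [← Nat.div_add_mod (ee t) 3, ht.2]
    rw [pow_add, pow_mul, om_cube, one_pow, one_mul]
  rw [he]
  ring

lemma NN_keys (n : ℕ) :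
    NN n 1 = NN n 2 ∧ NN n 0 - NN n 2 = (-1)^n * zagierB n := by
  have h1 : ((NN n 0 : ℤ) : ℂ) + om * ((NN n 1 : ℤ) : ℂ) + om^2 * ((NN n 2 : ℤ) : ℂ)
      = (((-1)^n * zagierB n : ℤ) : ℂ) := by
    rw [← sum_S_om n, fiber_split n (fun t => (gg t : ℂ) * om ^ ee t),
      om_pow_fiber n 0, om_pow_fiber n 1, om_pow_fiber n 2]
    ring
  set z : ℤ := (-1)^n * zagierB n with hz
  have key : ((NN n 0 - NN n 2 - z : ℤ) : ℂ) + ((NN n 1 - NN n 2 : ℤ) : ℂ) * om = 0 := by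
    push_cast
    linear_combination h1 - ((NN n 2 : ℤ) : ℂ) * om_sq
  have him := congrArg Complex.im key
  simp only [Complex.add_im, Complex.mul_im, Complex.intCast_im, Complex.intCast_re,
    Complex.zero_im, zero_mul, mul_zero, add_zero, zero_add] at him
  have h12 : NN n 1 = NN n 2 := by
    rcases mul_eq_zero.mp him with h | h
    · have : ((NN n 1 - NN n 2 : ℤ) : ℝ) = 0 := h
      have := Int.cast_injective (α := ℝ) (this.trans (Int.cast_zero).symm)
      omega
    · exact absurd h om_im_ne
  refine ⟨h12, ?_⟩
  have hre := congrArg Complex.re key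
  rw [h12, sub_self] at hre
  simp only [Complex.add_re, Complex.mul_re, Complex.intCast_re, Complex.intCast_im,
    Complex.zero_re, Int.cast_zero, zero_mul, mul_zero, sub_zero, add_zero, zero_add] at hre
  have : ((NN n 0 - NN n 2 - z : ℤ) : ℝ) = 0 := by
    rw [← hre]
  have := Int.cast_injective (α := ℝ) (this.trans (Int.cast_zero).symm)
  omega

lemma NN_total (n : ℕ) :
    NN n 0 + NN n 1 + NN n 2 = (((3*n).factorial / n.factorial ^ 3 : ℕ) : ℤ) := by
  have h := sum_S_one n
  rw [fiber_split n (fun t => (gg t : ℂ))] at h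
  have h2 : ((NN n 0 + NN n 1 + NN n 2 : ℤ) : ℂ)
      = (((3*n).factorial / n.factorial ^ 3 : ℕ) : ℂ) := by
    rw [NN, NN, NN]
    push_cast
    exact h
  have cast_inj : ∀ (x : ℤ) (m : ℕ), ((x : ℂ) = (m : ℂ)) → x = (m : ℤ) := by
    intro x m hx
    exact_mod_cast hx
  exact cast_inj _ _ h2

end ZagierBAux

/-- The binomial-sum formula for Zagier's sporadic sequence B:
`2 (-1)^n B_n = 3 ∑_{(a,b,c) ∈ S(n)} C(n;a) C(n;b) C(n;c) − C(3n;n,n,n)`, where `S(n)`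
consists of the triples of triples of nonnegative integers with
`∑ aᵢ = ∑ bᵢ = ∑ cᵢ = n`, `aᵢ + bᵢ + cᵢ = n` for each `i`, and
`3 ∣ b₂ + 2b₃ + 2c₂ + c₃`. -/
theorem zagierB_binomial_formula (n : ℕ) (hn : 0 < n) :
    2 * (-1) ^ n * zagierB n =
      3 * (∑ t ∈ ((Fintype.piFinset fun _ : Fin 3 => range (n + 1)) ×ˢ
            (Fintype.piFinset fun _ : Fin 3 => range (n + 1)) ×ˢ
            (Fintype.piFinset fun _ : Fin 3 => range (n + 1))).filter
            (fun t => (∑ i, t.1 i = n) ∧ (∑ i, t.2.1 i = n) ∧ (∑ i, t.2.2 i = n) ∧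
              (∀ i, t.1 i + t.2.1 i + t.2.2 i = n) ∧
              3 ∣ t.2.1 1 + 2 * t.2.1 2 + 2 * t.2.2 1 + t.2.2 2),
            multinom n t.1 * multinom n t.2.1 * multinom n t.2.2) -
        ((3 * n).factorial / (n.factorial ^ 3) : ℕ) := by
  classical
  have hb : ∀ (f : Fin 3 → ℕ), ∑ i, f i = n → ∀ i, f i < n + 1 := by
    intro f hf i
    have := Finset.single_le_sum (f := f) (fun j _ => Nat.zero_le _) (Finset.mem_univ i)
    omega
  have hset : ((Fintype.piFinset fun _ : Fin 3 => range (n + 1)) ×ˢ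
            (Fintype.piFinset fun _ : Fin 3 => range (n + 1)) ×ˢ
            (Fintype.piFinset fun _ : Fin 3 => range (n + 1))).filter
            (fun t => (∑ i, t.1 i = n) ∧ (∑ i, t.2.1 i = n) ∧ (∑ i, t.2.2 i = n) ∧
              (∀ i, t.1 i + t.2.1 i + t.2.2 i = n) ∧
              3 ∣ t.2.1 1 + 2 * t.2.1 2 + 2 * t.2.2 1 + t.2.2 2)
      = (ZagierBAux.SS n).filter (fun t => ZagierBAux.ee t % 3 = 0) := by
    ext t
    obtain ⟨a, b, c⟩ := t
    simp only [ZagierBAux.SS, ZagierBAux.ee, Finset.mem_filter, Finset.mem_product,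
      Fintype.mem_piFinset, Finset.mem_range, mem_piAntidiag, Finset.mem_univ,
      ne_eq, implies_true, and_true, funext_iff]
    constructor
    · rintro ⟨⟨hA, hB, hC⟩, h1, h2, h3, hcol, hdvd⟩
      exact ⟨⟨⟨h1, h2, h3⟩, fun i => hcol i⟩, by omega⟩
    · rintro ⟨⟨⟨h1, h2, h3⟩, hcol⟩, hmod⟩
      exact ⟨⟨hb _ h1, hb _ h2, hb _ h3⟩, h1, h2, h3, fun i => hcol i, by omega⟩
  rw [hset]
  have hsum : (∑ t ∈ (ZagierBAux.SS n).filter (fun t => ZagierBAux.ee t % 3 = 0),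
      multinom n t.1 * multinom n t.2.1 * multinom n t.2.2) = ZagierBAux.NN n 0 := by
    rw [ZagierBAux.NN]
    refine Finset.sum_congr rfl fun t ht => ?_
    simp only [ZagierBAux.SS, Finset.mem_filter, Finset.mem_product] at ht
    obtain ⟨⟨⟨hA, hB, hC⟩, -⟩, -⟩ := ht
    rw [mem_piAntidiag] at hA hB hC
    rw [ZagierBAux.multinom_eq n t.1 hA.1, ZagierBAux.multinom_eq n t.2.1 hB.1,
      ZagierBAux.multinom_eq n t.2.2 hC.1, ZagierBAux.gg]
    push_cast
    ring
  rw [hsum]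
  obtain ⟨h12, h02⟩ := ZagierBAux.NN_keys n
  have htot := ZagierBAux.NN_total n
  rw [mul_assoc]
  linarith [h02, h12, htot]
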